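/- arXiv:2108.01733 — 2 statements merged into one kernel-verified Lean document; each statement's English description precedes it below -/
import Mathlib

section
/- Suppose three unit vectors n, n', n'' in ℝ² and positive reals σ, σ', σ'' satisfy σ n + σ' n' + σ'' n'' = 0. If R', R'' are the (unique) planar rotations with R' n = n' and R'' n = n'', then for every vector v ∈ ℝ²: σ v + σ' R' v + σ'' R'' v = 0. -/
open Matrix

lemma rot_structure (R : Matrix (Fin 2) (Fin 2) ℝ)
    (ho : R * Rᵀ = 1) (hd : R.det = 1) :
    R 1 1 = R 0 0 ∧ R 1 0 = - R 0 1 := by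
  have h00 : (R * Rᵀ) 0 0 = (1 : Matrix (Fin 2) (Fin 2) ℝ) 0 0 := by rw [ho]
  have h11 : (R * Rᵀ) 1 1 = (1 : Matrix (Fin 2) (Fin 2) ℝ) 1 1 := by rw [ho]
  have h01 : (R * Rᵀ) 0 1 = (1 : Matrix (Fin 2) (Fin 2) ℝ) 0 1 := by rw [ho]
  simp [Matrix.mul_apply, Fin.sum_univ_two, Matrix.one_apply] at h00 h11 h01
  rw [Matrix.det_fin_two] at hd
  constructor <;> nlinarith [sq_nonneg (R 0 0 - R 1 1), sq_nonneg (R 0 1 + R 1 0)]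

/-- Planar Herring condition by rotation: if unit vectors `n, n', n''` in `ℝ²`
satisfy `σ n + σ' n' + σ'' n'' = 0` with positive surface tensions, and `R', R''`
are the planar rotations (elements of SO(2)) with `R' n = n'` and `R'' n = n''`,
then `σ v + σ' R' v + σ'' R'' v = 0` for every `v ∈ ℝ²`. -/
theorem herring_by_rotation_planar
    (σ σ' σ'' : ℝ) (hσ : 0 < σ) (hσ' : 0 < σ') (hσ'' : 0 < σ'')
    (n n' n'' : Fin 2 → ℝ)
    (hn : n ⬝ᵥ n = 1) (hn' : n' ⬝ᵥ n' = 1) (hn'' : n'' ⬝ᵥ n'' = 1)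
    (hherring : σ • n + σ' • n' + σ'' • n'' = 0)
    (R' R'' : Matrix (Fin 2) (Fin 2) ℝ)
    (hR'o : R' * R'ᵀ = 1) (hR'd : R'.det = 1) (hR'n : R' *ᵥ n = n')
    (hR''o : R'' * R''ᵀ = 1) (hR''d : R''.det = 1) (hR''n : R'' *ᵥ n = n'') :
    ∀ v : Fin 2 → ℝ, σ • v + σ' • (R' *ᵥ v) + σ'' • (R'' *ᵥ v) = 0 := by
  obtain ⟨hA1, hA2⟩ := rot_structure R' hR'o hR'd
  obtain ⟨hB1, hB2⟩ := rot_structure R'' hR''o hR''d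
  have hnsq : n 0 * n 0 + n 1 * n 1 = 1 := by
    simpa [dotProduct, Fin.sum_univ_two] using hn
  have hn'0 : R' 0 0 * n 0 + R' 0 1 * n 1 = n' 0 := by
    have := congrFun hR'n 0
    simpa [Matrix.mulVec, dotProduct, Fin.sum_univ_two] using this
  have hn'1 : R' 1 0 * n 0 + R' 1 1 * n 1 = n' 1 := by
    have := congrFun hR'n 1
    simpa [Matrix.mulVec, dotProduct, Fin.sum_univ_two] using this
  have hn''0 : R'' 0 0 * n 0 + R'' 0 1 * n 1 = n'' 0 := by
    have := congrFun hR''n 0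
    simpa [Matrix.mulVec, dotProduct, Fin.sum_univ_two] using this
  have hn''1 : R'' 1 0 * n 0 + R'' 1 1 * n 1 = n'' 1 := by
    have := congrFun hR''n 1
    simpa [Matrix.mulVec, dotProduct, Fin.sum_univ_two] using this
  have hh0 : σ * n 0 + σ' * n' 0 + σ'' * n'' 0 = 0 := by
    have := congrFun hherring 0
    simpa [Pi.add_apply, Pi.smul_apply, smul_eq_mul] using this
  have hh1 : σ * n 1 + σ' * n' 1 + σ'' * n'' 1 = 0 := by
    have := congrFun hherring 1
    simpa [Pi.add_apply, Pi.smul_apply, smul_eq_mul] using this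
  have e0 : (σ + σ' * R' 0 0 + σ'' * R'' 0 0) * n 0 - (σ' * R' 1 0 + σ'' * R'' 1 0) * n 1 = 0 := by
    linear_combination hh0 + σ' * hn'0 + σ'' * hn''0 - σ' * n 1 * hA2 - σ'' * n 1 * hB2
  have e1 : (σ' * R' 1 0 + σ'' * R'' 1 0) * n 0 + (σ + σ' * R' 0 0 + σ'' * R'' 0 0) * n 1 = 0 := by
    linear_combination hh1 + σ' * hn'1 + σ'' * hn''1 - σ' * n 1 * hA1 - σ'' * n 1 * hB1
  have key : (σ + σ' * R' 0 0 + σ'' * R'' 0 0) ^ 2 + (σ' * R' 1 0 + σ'' * R'' 1 0) ^ 2 = 0 := by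
    linear_combination ((σ + σ' * R' 0 0 + σ'' * R'' 0 0) * n 0 - (σ' * R' 1 0 + σ'' * R'' 1 0) * n 1) * e0
      + ((σ' * R' 1 0 + σ'' * R'' 1 0) * n 0 + (σ + σ' * R' 0 0 + σ'' * R'' 0 0) * n 1) * e1
      - ((σ + σ' * R' 0 0 + σ'' * R'' 0 0) ^ 2 + (σ' * R' 1 0 + σ'' * R'' 1 0) ^ 2) * hnsq
  have hp0 : σ + σ' * R' 0 0 + σ'' * R'' 0 0 = 0 := by
    have h : (σ + σ' * R' 0 0 + σ'' * R'' 0 0) ^ 2 = 0 :=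
      le_antisymm (by linarith [sq_nonneg (σ' * R' 1 0 + σ'' * R'' 1 0)])
        (sq_nonneg _)
    exact sq_eq_zero_iff.mp h
  have hq0 : σ' * R' 1 0 + σ'' * R'' 1 0 = 0 := by
    have h : (σ' * R' 1 0 + σ'' * R'' 1 0) ^ 2 = 0 :=
      le_antisymm (by linarith [sq_nonneg (σ + σ' * R' 0 0 + σ'' * R'' 0 0)])
        (sq_nonneg _)
    exact sq_eq_zero_iff.mp h
  intro v
  funext i
  fin_cases i <;>
    simp only [Pi.add_apply, Pi.smul_apply, Pi.zero_apply, smul_eq_mul,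
      Matrix.mulVec, dotProduct, Fin.sum_univ_two, Fin.mk_zero, Fin.mk_one, Fin.isValue]
  · linear_combination v 0 * hp0 - v 1 * hq0 + σ' * v 1 * hA2 + σ'' * v 1 * hB2
  · linear_combination v 0 * hq0 + v 1 * hp0 + σ' * v 1 * hA1 + σ'' * v 1 * hB1
end

section
/- Let (n, τ, t) be a C¹ orthonormal frame field on an open set U ⊂ ℝ³ with t = n × τ and (n·∇)τ = 0, and suppose ∇n is symmetric with (∇n)ᵀn = 0. Writing τ = J n with J = τ ∧ n + t ⊗ t, the divergence of τ admits the representation ∇·τ = (t ⊗ n) : (t·∇)(τ ∧ n), and the divergence of t satisfies ∇·t = −(t ⊗ τ) : ∇τ. -/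
open Matrix

/-- The divergence `∇·f = ∑ᵢ ∂ᵢ fᵢ` of a vector field on `ℝ³`. -/
noncomputable def vdiv (f : (Fin 3 → ℝ) → (Fin 3 → ℝ)) (x : Fin 3 → ℝ) : ℝ :=
  ∑ i : Fin 3, fderiv ℝ f x (Pi.single i 1) i

private lemma pi3_decomp (v : Fin 3 → ℝ) :
    v = v 0 • (Pi.single 0 1 : Fin 3 → ℝ) + v 1 • (Pi.single 1 1 : Fin 3 → ℝ)
      + v 2 • (Pi.single 2 1 : Fin 3 → ℝ) := by
  funext k; fin_cases k <;> simp

private lemma clm_expand (L : (Fin 3 → ℝ) →L[ℝ] (Fin 3 → ℝ)) (v : Fin 3 → ℝ) (i : Fin 3) :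
    L v i = v 0 * L (Pi.single 0 1) i + v 1 * L (Pi.single 1 1) i + v 2 * L (Pi.single 2 1) i := by
  conv_lhs => rw [pi3_decomp v]
  simp

/-- For a C¹ orthonormal frame field `(n, τ, t)` with `t = n × τ`, `(n·∇)τ = 0`,
symmetric `∇n` with `(∇n)ᵀ n = 0`, the divergences admit the representations
`∇·τ = (t ⊗ n) : (t·∇)(τ ∧ n)` and `∇·t = −(t ⊗ τ) : ∇τ`. -/
theorem divergence_representation_frame
    (U : Set (Fin 3 → ℝ)) (hU : IsOpen U)
    (n τ t : (Fin 3 → ℝ) → (Fin 3 → ℝ))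
    (hn : ContDiffOn ℝ 1 n U) (hτ : ContDiffOn ℝ 1 τ U) (ht : ContDiffOn ℝ 1 t U)
    (hframe : ∀ x ∈ U, n x ⬝ᵥ n x = 1 ∧ τ x ⬝ᵥ τ x = 1 ∧ n x ⬝ᵥ τ x = 0
      ∧ t x = crossProduct (n x) (τ x))
    (hsymm : ∀ x ∈ U, ∀ v w : Fin 3 → ℝ,
      fderiv ℝ n x v ⬝ᵥ w = v ⬝ᵥ fderiv ℝ n x w)
    (hker : ∀ x ∈ U, ∀ v : Fin 3 → ℝ, fderiv ℝ n x v ⬝ᵥ n x = 0)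
    (hnτ : ∀ x ∈ U, fderiv ℝ τ x (n x) = 0) :
    ∀ x ∈ U,
      (vdiv τ x = ∑ i : Fin 3, ∑ j : Fin 3, t x i * n x j *
          fderiv ℝ (fun y => fun i' j' : Fin 3 => τ y i' * n y j' - n y i' * τ y j')
            x (t x) i j)
      ∧ vdiv t x = -(t x ⬝ᵥ fderiv ℝ τ x (τ x)) := by
  intro x hx
  have hmem : U ∈ nhds x := hU.mem_nhds hx
  have hnx : DifferentiableAt ℝ n x := (hn.contDiffAt hmem).differentiableAt one_ne_zero
  have hτx : DifferentiableAt ℝ τ x := (hτ.contDiffAt hmem).differentiableAt one_ne_zero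
  have htx : DifferentiableAt ℝ t x := (ht.contDiffAt hmem).differentiableAt one_ne_zero
  have hdn : ∀ i : Fin 3, HasFDerivAt (fun y => n y i)
      ((ContinuousLinearMap.proj i).comp (fderiv ℝ n x)) x :=
    fun i => hasFDerivAt_pi'.1 hnx.hasFDerivAt i
  have hdτ : ∀ i : Fin 3, HasFDerivAt (fun y => τ y i)
      ((ContinuousLinearMap.proj i).comp (fderiv ℝ τ x)) x :=
    fun i => hasFDerivAt_pi'.1 hτx.hasFDerivAt i
  have hdt : ∀ i : Fin 3, HasFDerivAt (fun y => t y i)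
      ((ContinuousLinearMap.proj i).comp (fderiv ℝ t x)) x :=
    fun i => hasFDerivAt_pi'.1 htx.hasFDerivAt i
  -- basic frame equations at x
  have e1 : n x 0 * n x 0 + n x 1 * n x 1 + n x 2 * n x 2 = 1 := by
    have := (hframe x hx).1; simpa [dotProduct, Fin.sum_univ_three] using this
  have e2 : τ x 0 * τ x 0 + τ x 1 * τ x 1 + τ x 2 * τ x 2 = 1 := by
    have := (hframe x hx).2.1; simpa [dotProduct, Fin.sum_univ_three] using this
  have e3 : n x 0 * τ x 0 + n x 1 * τ x 1 + n x 2 * τ x 2 = 0 := by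
    have := (hframe x hx).2.2.1; simpa [dotProduct, Fin.sum_univ_three] using this
  -- cross product components on U
  have htc : ∀ i : Fin 3, ∀ y ∈ U, t y i = crossProduct (n y) (τ y) i :=
    fun i y hy => by rw [(hframe y hy).2.2.2]
  have ht0U : ∀ y ∈ U, t y 0 = n y 1 * τ y 2 - n y 2 * τ y 1 := by
    intro y hy; rw [htc 0 y hy, cross_apply]; simp
  have ht1U : ∀ y ∈ U, t y 1 = n y 2 * τ y 0 - n y 0 * τ y 2 := by
    intro y hy; rw [htc 1 y hy, cross_apply]; simp
  have ht2U : ∀ y ∈ U, t y 2 = n y 0 * τ y 1 - n y 1 * τ y 0 := by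
    intro y hy; rw [htc 2 y hy, cross_apply]; simp
  have ht0 : t x 0 = n x 1 * τ x 2 - n x 2 * τ x 1 := ht0U x hx
  have ht1 : t x 1 = n x 2 * τ x 0 - n x 0 * τ x 2 := ht1U x hx
  have ht2 : t x 2 = n x 0 * τ x 1 - n x 1 * τ x 0 := ht2U x hx
  -- (∇τ)ᵀ n = 0 componentwise
  have eT : ∀ i : Fin 3,
      n x 0 * fderiv ℝ τ x (Pi.single 0 1) i + n x 1 * fderiv ℝ τ x (Pi.single 1 1) i
        + n x 2 * fderiv ℝ τ x (Pi.single 2 1) i = 0 := by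
    intro i
    have h := congrFun (hnτ x hx) i
    rw [clm_expand] at h
    simpa using h
  -- (∇τ)ᵀ τ = 0 columnwise, from |τ| = 1 on U
  have eUT : ∀ j : Fin 3,
      τ x 0 * fderiv ℝ τ x (Pi.single j 1) 0 + τ x 1 * fderiv ℝ τ x (Pi.single j 1) 1
        + τ x 2 * fderiv ℝ τ x (Pi.single j 1) 2 = 0 := by
    have hg : HasFDerivAt (fun y => τ y 0 * τ y 0 + τ y 1 * τ y 1 + τ y 2 * τ y 2)
        ((τ x 0 • ((ContinuousLinearMap.proj 0).comp (fderiv ℝ τ x))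
            + τ x 0 • ((ContinuousLinearMap.proj 0).comp (fderiv ℝ τ x)))
          + (τ x 1 • ((ContinuousLinearMap.proj 1).comp (fderiv ℝ τ x))
            + τ x 1 • ((ContinuousLinearMap.proj 1).comp (fderiv ℝ τ x)))
          + (τ x 2 • ((ContinuousLinearMap.proj 2).comp (fderiv ℝ τ x))
            + τ x 2 • ((ContinuousLinearMap.proj 2).comp (fderiv ℝ τ x)))) x :=
      (((hdτ 0).mul (hdτ 0)).add ((hdτ 1).mul (hdτ 1))).add ((hdτ 2).mul (hdτ 2))
    have hconst : (fun y => τ y 0 * τ y 0 + τ y 1 * τ y 1 + τ y 2 * τ y 2)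
        =ᶠ[nhds x] fun _ => (1 : ℝ) := by
      refine Filter.eventuallyEq_of_mem hmem fun y hy => ?_
      have := (hframe y hy).2.1
      simpa [dotProduct, Fin.sum_univ_three] using this
    have h0 : fderiv ℝ (fun y => τ y 0 * τ y 0 + τ y 1 * τ y 1 + τ y 2 * τ y 2) x = 0 := by
      rw [hconst.fderiv_eq]; exact fderiv_const_apply 1
    have hD := hg.fderiv.symm.trans h0
    intro j
    have h2 := DFunLike.congr_fun hD (Pi.single j 1)
    simp only [ContinuousLinearMap.add_apply, ContinuousLinearMap.smul_apply,
      ContinuousLinearMap.comp_apply, ContinuousLinearMap.proj_apply,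
      ContinuousLinearMap.zero_apply, smul_eq_mul] at h2
    linarith
  -- symmetry of ∇n
  have sym : ∀ i j : Fin 3,
      fderiv ℝ n x (Pi.single i 1) j = fderiv ℝ n x (Pi.single j 1) i := by
    intro i j
    have h := hsymm x hx (Pi.single i 1) (Pi.single j 1)
    simpa [dotProduct_single, single_dotProduct] using h
  -- derivative of the wedge-matrix field
  have hF : HasFDerivAt (fun y => fun i' j' : Fin 3 => τ y i' * n y j' - n y i' * τ y j')
      (ContinuousLinearMap.pi fun i => ContinuousLinearMap.pi fun j =>
        (τ x i • ((ContinuousLinearMap.proj j).comp (fderiv ℝ n x))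
          + n x j • ((ContinuousLinearMap.proj i).comp (fderiv ℝ τ x)))
        - (n x i • ((ContinuousLinearMap.proj j).comp (fderiv ℝ τ x))
          + τ x j • ((ContinuousLinearMap.proj i).comp (fderiv ℝ n x)))) x :=
    hasFDerivAt_pi.2 fun i => hasFDerivAt_pi.2 fun j =>
      ((hdτ i).mul (hdn j)).sub ((hdn i).mul (hdτ j))
  have hFij : ∀ i j : Fin 3,
      fderiv ℝ (fun y => fun i' j' : Fin 3 => τ y i' * n y j' - n y i' * τ y j') x (t x) i j
        = τ x i * fderiv ℝ n x (t x) j + n x j * fderiv ℝ τ x (t x) i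
          - (n x i * fderiv ℝ τ x (t x) j + τ x j * fderiv ℝ n x (t x) i) := by
    intro i j
    rw [hF.fderiv]
    simp only [ContinuousLinearMap.pi_apply, ContinuousLinearMap.sub_apply,
      ContinuousLinearMap.add_apply, ContinuousLinearMap.smul_apply,
      ContinuousLinearMap.comp_apply, ContinuousLinearMap.proj_apply, smul_eq_mul]
  constructor
  · -- divergence of τ
    have hTt : ∀ i : Fin 3, fderiv ℝ τ x (t x) i
        = t x 0 * fderiv ℝ τ x (Pi.single 0 1) i + t x 1 * fderiv ℝ τ x (Pi.single 1 1) i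
          + t x 2 * fderiv ℝ τ x (Pi.single 2 1) i := fun i => clm_expand _ _ i
    have hNt : ∀ i : Fin 3, fderiv ℝ n x (t x) i
        = t x 0 * fderiv ℝ n x (Pi.single 0 1) i + t x 1 * fderiv ℝ n x (Pi.single 1 1) i
          + t x 2 * fderiv ℝ n x (Pi.single 2 1) i := fun i => clm_expand _ _ i
    simp only [vdiv, Fin.sum_univ_three, hFij, hTt, hNt, ht0, ht1, ht2]
    linear_combination (-(((n x 0 * n x 0 + n x 1 * n x 1 + n x 2 * n x 2) + 1) * (fderiv ℝ τ x (Pi.single 0 1) 0 + fderiv ℝ τ x (Pi.single 1 1) 1 + fderiv ℝ τ x (Pi.single 2 1) 2))) * e1 + (-((n x 0 * n x 0 + n x 1 * n x 1 + n x 2 * n x 2) * (n x 0 * n x 0 + n x 1 * n x 1 + n x 2 * n x 2) * (fderiv ℝ τ x (Pi.single 0 1) 0 + fderiv ℝ τ x (Pi.single 1 1) 1 + fderiv ℝ τ x (Pi.single 2 1) 2))) * e2 + ((n x 0 * n x 0 + n x 1 * n x 1 + n x 2 * n x 2) * (n x 0 * τ x 0 + n x 1 * τ x 1 + n x 2 *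 τ x 2) * (fderiv ℝ τ x (Pi.single 0 1) 0 + fderiv ℝ τ x (Pi.single 1 1) 1 + fderiv ℝ τ x (Pi.single 2 1) 2) - (n x 0 * n x 0 + n x 1 * n x 1 + n x 2 * n x 2) * ((n x 0 * τ x 0 + n x 0 * τ x 0) * (fderiv ℝ τ x (Pi.single 0 1) 0) + (n x 0 * τ x 1 + n x 1 * τ x 0) * (fderiv ℝ τ x (Pi.single 1 1) 0) + (n x 0 * τ x 2 + n x 2 * τ x 0) * (fderiv ℝ τ x (Pi.single 2 1) 0) + (n x 1 * τ x 0 + n x 0 * τ x 1) * (fderiv ℝ τ x (Pi.single 0 1) 1) + (n x 1 * τ x 1 + n x 1 * τ x 1) * (fderiv ℝ τ x (Pi.single 1 1) 1) + (n x 1 * τ x 2 + n x 2 * τ x 1) * (fderiv ℝ τ x (Pi.single 2 1) 1) + (n x 2 * τ x 0 + n x 0 * τ x 2) * (fderiv ℝ τ x (Pi.single 0 1) 2) + (n x 2 * τ x 1 + n x 1 * τ x 2) * (fderiv ℝ τ x (Pi.single 1 1) 2) + (n x 2 * τ x 2 + n x 2 * τ x 2) * (fderiv ℝ τ x (Pi.single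 2 1) 2)) + ((n x 1 * τ x 2 - n x 2 * τ x 1) * ((n x 1 * τ x 2 - n x 2 * τ x 1) * (fderiv ℝ n x (Pi.single 0 1) 0) + (n x 2 * τ x 0 - n x 0 * τ x 2) * (fderiv ℝ n x (Pi.single 1 1) 0) + (n x 0 * τ x 1 - n x 1 * τ x 0) * (fderiv ℝ n x (Pi.single 2 1) 0)) + (n x 2 * τ x 0 - n x 0 * τ x 2) * ((n x 1 * τ x 2 - n x 2 * τ x 1) * (fderiv ℝ n x (Pi.single 0 1) 1) + (n x 2 * τ x 0 - n x 0 * τ x 2) * (fderiv ℝ n x (Pi.single 1 1) 1) + (n x 0 * τ x 1 - n x 1 * τ x 0) * (fderiv ℝ n x (Pi.single 2 1) 1)) + (n x 0 * τ x 1 - n x 1 * τ x 0) * ((n x 1 * τ x 2 - n x 2 * τ x 1) * (fderiv ℝ n x (Pi.single 0 1) 2) + (n x 2 * τ x 0 - n x 0 * τ x 2) * (fderiv ℝ n x (Pi.single 1 1) 2) + (n x 0 * τ x 1 - n x 1 * τ x 0) * (fderiv ℝ n x (Pi.single 2 1) 2)))) * e3 + ((n x 0 * n x 0 + n x 1 *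 n x 1 + n x 2 * n x 2) * (τ x 0 * τ x 0 + τ x 1 * τ x 1 + τ x 2 * τ x 2) * n x 0) * eT 0 + ((n x 0 * n x 0 + n x 1 * n x 1 + n x 2 * n x 2) * (τ x 0 * τ x 0 + τ x 1 * τ x 1 + τ x 2 * τ x 2) * n x 1) * eT 1 + ((n x 0 * n x 0 + n x 1 * n x 1 + n x 2 * n x 2) * (τ x 0 * τ x 0 + τ x 1 * τ x 1 + τ x 2 * τ x 2) * n x 2) * eT 2 + ((n x 0 * n x 0 + n x 1 * n x 1 + n x 2 * n x 2) * (n x 0 * n x 0 + n x 1 * n x 1 + n x 2 * n x 2) * τ x 0) * eUT 0 + ((n x 0 * n x 0 + n x 1 * n x 1 + n x 2 * n x 2) * (n x 0 * n x 0 + n x 1 * n x 1 + n x 2 * n x 2) * τ x 1) * eUT 1 + ((n x 0 * n x 0 + n x 1 * n x 1 + n x 2 * n x 2) * (n x 0 * n x 0 + n x 1 * n x 1 + n x 2 * n x 2) * τ x 2) * eUT 2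
  · -- divergence of t
    have hS00 : fderiv ℝ t x (Pi.single 0 1) 0
        = n x 1 * fderiv ℝ τ x (Pi.single 0 1) 2 + τ x 2 * fderiv ℝ n x (Pi.single 0 1) 1
          - (n x 2 * fderiv ℝ τ x (Pi.single 0 1) 1 + τ x 1 * fderiv ℝ n x (Pi.single 0 1) 2) := by
      have ha := (hdt 0).fderiv
      have hb : fderiv ℝ (fun y => t y 0) x
          = fderiv ℝ (fun y => n y 1 * τ y 2 - n y 2 * τ y 1) x :=
        Filter.EventuallyEq.fderiv_eq
          (Filter.eventuallyEq_of_mem hmem fun y hy => ht0U y hy)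
      have hc := (((hdn 1).mul (hdτ 2)).sub ((hdn 2).mul (hdτ 1))).fderiv
      have hD := ha.symm.trans (hb.trans hc)
      have h2 := DFunLike.congr_fun hD (Pi.single 0 1)
      simp only [ContinuousLinearMap.sub_apply, ContinuousLinearMap.add_apply,
        ContinuousLinearMap.smul_apply, ContinuousLinearMap.comp_apply,
        ContinuousLinearMap.proj_apply, smul_eq_mul] at h2
      linarith
    have hS11 : fderiv ℝ t x (Pi.single 1 1) 1
        = n x 2 * fderiv ℝ τ x (Pi.single 1 1) 0 + τ x 0 * fderiv ℝ n x (Pi.single 1 1) 2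
          - (n x 0 * fderiv ℝ τ x (Pi.single 1 1) 2 + τ x 2 * fderiv ℝ n x (Pi.single 1 1) 0) := by
      have ha := (hdt 1).fderiv
      have hb : fderiv ℝ (fun y => t y 1) x
          = fderiv ℝ (fun y => n y 2 * τ y 0 - n y 0 * τ y 2) x :=
        Filter.EventuallyEq.fderiv_eq
          (Filter.eventuallyEq_of_mem hmem fun y hy => ht1U y hy)
      have hc := (((hdn 2).mul (hdτ 0)).sub ((hdn 0).mul (hdτ 2))).fderiv
      have hD := ha.symm.trans (hb.trans hc)
      have h2 := DFunLike.congr_fun hD (Pi.single 1 1)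
      simp only [ContinuousLinearMap.sub_apply, ContinuousLinearMap.add_apply,
        ContinuousLinearMap.smul_apply, ContinuousLinearMap.comp_apply,
        ContinuousLinearMap.proj_apply, smul_eq_mul] at h2
      linarith
    have hS22 : fderiv ℝ t x (Pi.single 2 1) 2
        = n x 0 * fderiv ℝ τ x (Pi.single 2 1) 1 + τ x 1 * fderiv ℝ n x (Pi.single 2 1) 0
          - (n x 1 * fderiv ℝ τ x (Pi.single 2 1) 0 + τ x 0 * fderiv ℝ n x (Pi.single 2 1) 1) := by
      have ha := (hdt 2).fderiv
      have hb : fderiv ℝ (fun y => t y 2) x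
          = fderiv ℝ (fun y => n y 0 * τ y 1 - n y 1 * τ y 0) x :=
        Filter.EventuallyEq.fderiv_eq
          (Filter.eventuallyEq_of_mem hmem fun y hy => ht2U y hy)
      have hc := (((hdn 0).mul (hdτ 1)).sub ((hdn 1).mul (hdτ 0))).fderiv
      have hD := ha.symm.trans (hb.trans hc)
      have h2 := DFunLike.congr_fun hD (Pi.single 2 1)
      simp only [ContinuousLinearMap.sub_apply, ContinuousLinearMap.add_apply,
        ContinuousLinearMap.smul_apply, ContinuousLinearMap.comp_apply,
        ContinuousLinearMap.proj_apply, smul_eq_mul] at h2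
      linarith
    have hTτ : ∀ i : Fin 3, fderiv ℝ τ x (τ x) i
        = τ x 0 * fderiv ℝ τ x (Pi.single 0 1) i + τ x 1 * fderiv ℝ τ x (Pi.single 1 1) i
          + τ x 2 * fderiv ℝ τ x (Pi.single 2 1) i := fun i => clm_expand _ _ i
    simp only [vdiv, dotProduct, Fin.sum_univ_three, hS00, hS11, hS22, hTτ, ht0, ht1, ht2]
    linear_combination (-(((n x 1 * τ x 2 - n x 2 * τ x 1) * ((fderiv ℝ τ x (Pi.single 0 1) 0) * τ x 0 + (fderiv ℝ τ x (Pi.single 1 1) 0) * τ x 1 + (fderiv ℝ τ x (Pi.single 2 1) 0) * τ x 2) + (n x 2 * τ x 0 - n x 0 * τ x 2) * ((fderiv ℝ τ x (Pi.single 0 1) 1) * τ x 0 + (fderiv ℝ τ x (Pi.single 1 1) 1) * τ x 1 + (fderiv ℝ τ x (Pi.single 2 1) 1) * τ x 2) + (n x 0 * τ x 1 - n x 1 * τ x 0) * ((fderiv ℝ τ x (Pi.single 0 1) 2) * τ x 0 + (fderiv ℝ τ x (Pi.single 1 1) 2) * τ x 1 + (fderiv ℝ τ x (Pi.single 2 1)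 2) * τ x 2)) + ((n x 1 * (fderiv ℝ τ x (Pi.single 0 1) 2) - n x 2 * (fderiv ℝ τ x (Pi.single 0 1) 1)) + (n x 2 * (fderiv ℝ τ x (Pi.single 1 1) 0) - n x 0 * (fderiv ℝ τ x (Pi.single 1 1) 2)) + (n x 0 * (fderiv ℝ τ x (Pi.single 2 1) 1) - n x 1 * (fderiv ℝ τ x (Pi.single 2 1) 0))))) * e1 + (-((n x 0 * n x 0 + n x 1 * n x 1 + n x 2 * n x 2) * ((n x 1 * (fderiv ℝ τ x (Pi.single 0 1) 2) - n x 2 * (fderiv ℝ τ x (Pi.single 0 1) 1)) + (n x 2 * (fderiv ℝ τ x (Pi.single 1 1) 0) - n x 0 * (fderiv ℝ τ x (Pi.single 1 1) 2)) + (n x 0 * (fderiv ℝ τ x (Pi.single 2 1) 1) - n x 1 * (fderiv ℝ τ x (Pi.single 2 1) 0))))) * e2 + ((n x 0 * ((fderiv ℝ τ x (Pi.single 0 1) 0) * (n x 1 * τ x 2 - n x 2 * τ x 1) + (fderiv ℝ τ x (Pi.single 0 1) 1) * (n x 2 * τ x 0 - n x 0 * τ x 2) + (fderiv ℝ τ x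 (Pi.single 0 1) 2) * (n x 0 * τ x 1 - n x 1 * τ x 0)) + n x 1 * ((fderiv ℝ τ x (Pi.single 1 1) 0) * (n x 1 * τ x 2 - n x 2 * τ x 1) + (fderiv ℝ τ x (Pi.single 1 1) 1) * (n x 2 * τ x 0 - n x 0 * τ x 2) + (fderiv ℝ τ x (Pi.single 1 1) 2) * (n x 0 * τ x 1 - n x 1 * τ x 0)) + n x 2 * ((fderiv ℝ τ x (Pi.single 2 1) 0) * (n x 1 * τ x 2 - n x 2 * τ x 1) + (fderiv ℝ τ x (Pi.single 2 1) 1) * (n x 2 * τ x 0 - n x 0 * τ x 2) + (fderiv ℝ τ x (Pi.single 2 1) 2) * (n x 0 * τ x 1 - n x 1 * τ x 0)) - ((n x 1 * τ x 2 - n x 2 * τ x 1) * ((fderiv ℝ τ x (Pi.single 0 1) 0) * n x 0 + (fderiv ℝ τ x (Pi.single 0 1) 1) * n x 1 + (fderiv ℝ τ x (Pi.single 0 1) 2) * n x 2) + (n x 2 * τ x 0 - n x 0 * τ x 2) * ((fderiv ℝ τ x (Pi.single 1 1) 0) * n x 0 + (fderiv ℝ τ x (Pi.single 1 1) 1) *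 n x 1 + (fderiv ℝ τ x (Pi.single 1 1) 2) * n x 2) + (n x 0 * τ x 1 - n x 1 * τ x 0) * ((fderiv ℝ τ x (Pi.single 2 1) 0) * n x 0 + (fderiv ℝ τ x (Pi.single 2 1) 1) * n x 1 + (fderiv ℝ τ x (Pi.single 2 1) 2) * n x 2))) + (n x 0 * τ x 0 + n x 1 * τ x 1 + n x 2 * τ x 2) * ((n x 1 * (fderiv ℝ τ x (Pi.single 0 1) 2) - n x 2 * (fderiv ℝ τ x (Pi.single 0 1) 1)) + (n x 2 * (fderiv ℝ τ x (Pi.single 1 1) 0) - n x 0 * (fderiv ℝ τ x (Pi.single 1 1) 2)) + (n x 0 * (fderiv ℝ τ x (Pi.single 2 1) 1) - n x 1 * (fderiv ℝ τ x (Pi.single 2 1) 0)))) * e3 + ((n x 0 * n x 0 + n x 1 * n x 1 + n x 2 * n x 2) * (n x 1 * τ x 2 - n x 2 * τ x 1)) * eUT 0 + ((n x 0 * n x 0 + n x 1 * n x 1 + n x 2 * n x 2) * (n x 2 * τ x 0 - n x 0 * τ x 2)) * eUT 1 + ((n x 0 * n x 0 + n x 1 * n x 1 + n x 2 * n x 2)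 * (n x 0 * τ x 1 - n x 1 * τ x 0)) * eUT 2 + τ x 0 * sym 1 2 + (-τ x 1) * sym 0 2 + τ x 2 * sym 0 1
end
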